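/- Let m ≥ 1. For X ∈ ℍ^m and purely imaginary Z ∈ ℍ, let M(X,Z) be the (m+2)×(m+2) quaternion matrix in block form M(X,Z) = [[1 + ‖X‖²/8 + Z/2, −X*/2, ‖X‖²/8 + Z/2], [−X/2, I_m, −X/2], [−‖X‖²/8 − Z/2, X*/2, 1 − ‖X‖²/8 − Z/2]], and let J be the block-diagonal matrix diag(−1, I_m, 1). Then M(X,Z)ᴴ · J · M(X,Z) = J, where M ᴴ denotes the quaternionic conjugate transpose, (Mᴴ)ᵢⱼ = (Mⱼᵢ)*. (That is, M(X,Z) preserves the sesquilinear form q(z,w) = −z̄₀w₀ + Σⱼ₌₁ᵐ⁺¹ z̄ⱼwⱼ, so M(X,Z) ∈ Sp(m+1, 1).) -/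
import Mathlib

open Quaternion Matrix

noncomputable section

/-- The index type for `(m+2) × (m+2)` matrices in `(1, m, 1)` block form. -/
abbrev Idx (m : ℕ) := Unit ⊕ Fin m ⊕ Unit

/-- The group element `M(X,Z)`:
`[[1 + ‖X‖²/8 + Z/2, -X*/2, ‖X‖²/8 + Z/2], [-X/2, I, -X/2],
  [-‖X‖²/8 - Z/2, X*/2, 1 - ‖X‖²/8 - Z/2]]`, where `‖X‖² = ∑ⱼ |Xⱼ|²`. -/
def matM (m : ℕ) (X : Fin m → Quaternion ℝ) (Z : Quaternion ℝ) :
    Matrix (Idx m) (Idx m) (Quaternion ℝ) :=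
  Matrix.of fun i j =>
    match i, j with
    | Sum.inl _, Sum.inl _ =>
        1 + (((∑ k, Quaternion.normSq (X k)) / 8 : ℝ) : Quaternion ℝ) + Z / 2
    | Sum.inl _, Sum.inr (Sum.inl k) => -star (X k) / 2
    | Sum.inl _, Sum.inr (Sum.inr _) =>
        (((∑ k, Quaternion.normSq (X k)) / 8 : ℝ) : Quaternion ℝ) + Z / 2
    | Sum.inr (Sum.inl k), Sum.inl _ => -X k / 2
    | Sum.inr (Sum.inl k), Sum.inr (Sum.inl l) => if k = l then 1 else 0
    | Sum.inr (Sum.inl k), Sum.inr (Sum.inr _) => -X k / 2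
    | Sum.inr (Sum.inr _), Sum.inl _ =>
        -(((∑ k, Quaternion.normSq (X k)) / 8 : ℝ) : Quaternion ℝ) - Z / 2
    | Sum.inr (Sum.inr _), Sum.inr (Sum.inl k) => star (X k) / 2
    | Sum.inr (Sum.inr _), Sum.inr (Sum.inr _) =>
        1 - (((∑ k, Quaternion.normSq (X k)) / 8 : ℝ) : Quaternion ℝ) - Z / 2

/-- The block-diagonal matrix `J = diag(-1, I_m, 1)` defining the sesquilinear form
`q(z,w) = -z̄₀w₀ + ∑ⱼ z̄ⱼwⱼ`. -/
def matJ (m : ℕ) : Matrix (Idx m) (Idx m) (Quaternion ℝ) :=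
  Matrix.of fun i j =>
    match i, j with
    | Sum.inl _, Sum.inl _ => -1
    | Sum.inr (Sum.inl k), Sum.inr (Sum.inl l) => if k = l then 1 else 0
    | Sum.inr (Sum.inr _), Sum.inr (Sum.inr _) => 1
    | _, _ => 0

theorem stmt5_div_two (b : Quaternion ℝ) : b / 2 = ((2:ℝ)⁻¹) • b := by
  have h : ((2:ℝ) : Quaternion ℝ) = 2 := by norm_cast
  rw [div_eq_mul_inv, ← h, ← Quaternion.coe_inv, Quaternion.mul_coe_eq_smul]

theorem stmt5_term (a : Quaternion ℝ) :
    star (-a / 2) * (-a / 2) = ((Quaternion.normSq a / 4 : ℝ) : Quaternion ℝ) := by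
  rw [stmt5_div_two, Quaternion.star_smul, smul_mul_smul_comm, star_neg, neg_mul_neg,
    Quaternion.star_mul_self, Quaternion.smul_coe]
  norm_cast
  ring

theorem stmt5_sum (m : ℕ) (X : Fin m → Quaternion ℝ) :
    ∑ k, star (-X k / 2) * (-X k / 2)
      = (((∑ k, Quaternion.normSq (X k)) / 4 : ℝ) : Quaternion ℝ) := by
  rw [Finset.sum_congr rfl (fun k _ => stmt5_term (X k))]
  simp only [show ∀ r : ℝ, ((r:ℝ) : Quaternion ℝ) = algebraMap ℝ (Quaternion ℝ) r from fun _ => rfl]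
  rw [← map_sum (algebraMap ℝ (Quaternion ℝ))]
  congr 1
  rw [Finset.sum_div]

set_option maxHeartbeats 2000000 in
/-- `M(X,Z)ᴴ · J · M(X,Z) = J`, i.e. `M(X,Z)` preserves the
sesquilinear form `q`, so `M(X,Z) ∈ Sp(m+1, 1)`. -/
theorem stmt_5 (m : ℕ) (hm : 1 ≤ m) (X : Fin m → Quaternion ℝ) (Z : Quaternion ℝ)
    (hZ : Z.re = 0) :
    (matM m X Z)ᴴ * matJ m * matM m X Z = matJ m := by
  have hJM0 : ∀ j, (matJ m * matM m X Z) (Sum.inl ()) j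
      = -(matM m X Z (Sum.inl ()) j) := by
    intro j; simp [Matrix.mul_apply, Fintype.sum_sum_type, matJ]
  have hJM1 : ∀ (k : Fin m) j, (matJ m * matM m X Z) (Sum.inr (Sum.inl k)) j
      = matM m X Z (Sum.inr (Sum.inl k)) j := by
    intro k j; simp [Matrix.mul_apply, Fintype.sum_sum_type, matJ, ite_mul]
  have hJM2 : ∀ j, (matJ m * matM m X Z) (Sum.inr (Sum.inr ())) j
      = matM m X Z (Sum.inr (Sum.inr ())) j := by
    intro j; simp [Matrix.mul_apply, Fintype.sum_sum_type, matJ]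
  have key : ∀ i j, ((matM m X Z)ᴴ * matJ m * matM m X Z) i j
      = -(star (matM m X Z (Sum.inl ()) i) * matM m X Z (Sum.inl ()) j)
        + (∑ k, star (matM m X Z (Sum.inr (Sum.inl k)) i)
            * matM m X Z (Sum.inr (Sum.inl k)) j)
        + star (matM m X Z (Sum.inr (Sum.inr ())) i)
            * matM m X Z (Sum.inr (Sum.inr ())) j := by
    intro i j
    rw [Matrix.mul_assoc, Matrix.mul_apply, Fintype.sum_sum_type, Fintype.sum_sum_type]
    simp only [Fintype.sum_unique, conjTranspose_apply, hJM0, hJM1, hJM2, mul_neg]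
    exact (add_assoc _ _ _).symm
  refine Matrix.ext fun i j => ?_
  rw [key]
  rcases i with i | i | i <;> rcases j with j | j | j <;>
    simp only [matM, matJ, Matrix.of_apply]
  next =>
    rw [stmt5_sum]
    generalize (∑ k, Quaternion.normSq (X k)) = r
    simp only [stmt5_div_two]
    ext <;> simp [hZ, -Quaternion.coe_div] <;> ring
  next =>
    simp only [apply_ite (star : Quaternion ℝ → Quaternion ℝ), star_one, star_zero,
      mul_ite, mul_one, mul_zero, ite_mul, one_mul, zero_mul,
      Finset.sum_ite_eq, Finset.sum_ite_eq', Finset.mem_univ, if_true]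
    generalize (∑ k, Quaternion.normSq (X k)) = r
    simp only [stmt5_div_two]
    ext <;> simp [hZ, -Quaternion.coe_div] <;> ring
  next =>
    rw [stmt5_sum]
    generalize (∑ k, Quaternion.normSq (X k)) = r
    simp only [stmt5_div_two]
    ext <;> simp [hZ, -Quaternion.coe_div] <;> ring
  next =>
    simp only [apply_ite (star : Quaternion ℝ → Quaternion ℝ), star_one, star_zero,
      mul_ite, mul_one, mul_zero, ite_mul, one_mul, zero_mul,
      Finset.sum_ite_eq, Finset.sum_ite_eq', Finset.mem_univ, if_true]
    generalize (∑ k, Quaternion.normSq (X k)) = r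
    simp only [stmt5_div_two]
    ext <;> simp [hZ, -Quaternion.coe_div] <;> ring
  next =>
    simp only [apply_ite (star : Quaternion ℝ → Quaternion ℝ), star_one, star_zero,
      mul_ite, mul_one, mul_zero, ite_mul, one_mul, zero_mul,
      Finset.sum_ite_eq, Finset.sum_ite_eq', Finset.mem_univ, if_true]
    rw [neg_div, neg_div, star_neg, neg_mul_neg, add_right_comm, neg_add_cancel, zero_add]
    by_cases h : i = j
    · simp [h]
    · simp [h, Ne.symm h]
  next =>
    simp only [apply_ite (star : Quaternion ℝ → Quaternion ℝ), star_one, star_zero,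
      mul_ite, mul_one, mul_zero, ite_mul, one_mul, zero_mul,
      Finset.sum_ite_eq, Finset.sum_ite_eq', Finset.mem_univ, if_true]
    generalize (∑ k, Quaternion.normSq (X k)) = r
    simp only [stmt5_div_two]
    ext <;> simp [hZ, -Quaternion.coe_div] <;> ring
  next =>
    rw [stmt5_sum]
    generalize (∑ k, Quaternion.normSq (X k)) = r
    simp only [stmt5_div_two]
    ext <;> simp [hZ, -Quaternion.coe_div] <;> ring
  next =>
    simp only [apply_ite (star : Quaternion ℝ → Quaternion ℝ), star_one, star_zero,
      mul_ite, mul_one, mul_zero, ite_mul, one_mul, zero_mul,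
      Finset.sum_ite_eq, Finset.sum_ite_eq', Finset.mem_univ, if_true]
    generalize (∑ k, Quaternion.normSq (X k)) = r
    simp only [stmt5_div_two]
    ext <;> simp [hZ, -Quaternion.coe_div] <;> ring
  next =>
    rw [stmt5_sum]
    generalize (∑ k, Quaternion.normSq (X k)) = r
    simp only [stmt5_div_two]
    ext <;> simp [hZ, -Quaternion.coe_div] <;> ring
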